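/- arXiv:0811.3756 — 3 statements merged into one kernel-verified Lean document; each statement's English description precedes it below -/
import Mathlib

section
/- Let y : [0, z₀) → ℝ be C², positive, with y(0) = α > 0, ẏ(0) = 0, and satisfying ÿ(z) + (1/z)ẏ(z) = σ/y(z)² on (0, z₀) with σ > 0. Then y is nondecreasing, and in particular y(z) ≥ α for all z in [0, z₀). -/
open Set Filter

theorem stmt1 (σ α z₀ : ℝ) (hσ : 0 < σ) (hα : 0 < α) (hz₀ : 0 < z₀)
    (y : ℝ → ℝ) (hy : ContDiffOn ℝ 2 y (Ico 0 z₀))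
    (hpos : ∀ z ∈ Ico (0:ℝ) z₀, 0 < y z)
    (hy0 : y 0 = α)
    (hy'0 : Tendsto (deriv y) (nhdsWithin 0 (Ioi 0)) (nhds 0))
    (hode : ∀ z ∈ Ioo (0:ℝ) z₀,
      deriv (deriv y) z + (1 / z) * deriv y z = σ / (y z) ^ 2) :
    MonotoneOn y (Ico 0 z₀) ∧ ∀ z ∈ Ico (0:ℝ) z₀, α ≤ y z := by
  have hopen : IsOpen (Ioo (0:ℝ) z₀) := isOpen_Ioo
  have hsub : Ioo (0:ℝ) z₀ ⊆ Ico 0 z₀ := Ioo_subset_Ico_self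
  have hyo : ContDiffOn ℝ 2 y (Ioo 0 z₀) := hy.mono hsub
  have hd1 : ContDiffOn ℝ 1 (deriv y) (Ioo 0 z₀) :=
    hyo.deriv_of_isOpen hopen (by norm_num)
  have hder_diff : ∀ z ∈ Ioo (0:ℝ) z₀, DifferentiableAt ℝ (deriv y) z := by
    intro z hz
    exact (hd1.differentiableOn one_ne_zero).differentiableAt (hopen.mem_nhds hz)
  -- g z = z * deriv y z
  set g : ℝ → ℝ := fun z => z * deriv y z with hg
  have hgdiff : ∀ z ∈ Ioo (0:ℝ) z₀, DifferentiableAt ℝ g z := fun z hz =>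
    (differentiableAt_id.mul (hder_diff z hz))
  have hgderiv : ∀ z ∈ Ioo (0:ℝ) z₀, deriv g z = z * (σ / (y z) ^ 2) := by
    intro z hz
    have hz0 : (0:ℝ) < z := hz.1
    have : deriv g z = deriv y z + z * deriv (deriv y) z := by
      rw [hg, deriv_fun_mul differentiableAt_fun_id (hder_diff z hz), deriv_id'']
      ring
    rw [this, ← hode z hz]
    field_simp
    ring
  have hgpos : ∀ z ∈ Ioo (0:ℝ) z₀, 0 < deriv g z := by
    intro z hz
    rw [hgderiv z hz]
    exact mul_pos hz.1 (div_pos hσ (pow_pos (hpos z (hsub hz)) 2))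
  have hgcont : ContinuousOn g (Ioo 0 z₀) :=
    continuousOn_id.mul (hd1.continuousOn)
  have hgmono : StrictMonoOn g (Ioo 0 z₀) :=
    strictMonoOn_of_deriv_pos (convex_Ioo 0 z₀) hgcont
      (by rwa [interior_Ioo])
  -- g tends to 0 at 0⁺
  have hgtend : Tendsto g (nhdsWithin 0 (Ioi 0)) (nhds 0) := by
    have h1 : Tendsto (fun z : ℝ => z) (nhdsWithin 0 (Ioi 0)) (nhds 0) :=
      tendsto_nhdsWithin_of_tendsto_nhds tendsto_id
    simpa using h1.mul hy'0
  -- hence g ≥ 0 on Ioo, hence deriv y ≥ 0 on Ioo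
  have hgnonneg : ∀ z ∈ Ioo (0:ℝ) z₀, 0 ≤ g z := by
    intro z hz
    refine le_of_tendsto hgtend ?_
    filter_upwards [Ioo_mem_nhdsGT_of_mem (by exact ⟨le_rfl, hz.1⟩ : (0:ℝ) ∈ Ico 0 z)] with t ht
    exact (hgmono ⟨ht.1, ht.2.trans hz.2⟩ hz ht.2).le
  have hderiv_nonneg : ∀ z ∈ Ioo (0:ℝ) z₀, 0 ≤ deriv y z := by
    intro z hz
    have h2 := hgnonneg z hz
    simp only [hg] at h2
    have hz0 : (0:ℝ) < z := hz.1
    nlinarith [h2]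
  have hycont : ContinuousOn y (Ico 0 z₀) := hy.continuousOn
  have hmono : MonotoneOn y (Ico 0 z₀) := by
    have := monotoneOn_of_deriv_nonneg (convex_Ico 0 z₀) hycont
      (fun z hz => by
        rw [interior_Ico] at hz
        exact ((hyo z hz).differentiableWithinAt two_ne_zero).differentiableAt
          (hopen.mem_nhds hz) |>.differentiableWithinAt)
      (fun z hz => by rw [interior_Ico] at hz; exact hderiv_nonneg z hz)
    exact this
  refine ⟨hmono, fun z hz => ?_⟩
  have h0 : (0:ℝ) ∈ Ico (0:ℝ) z₀ := ⟨le_refl _, hz₀⟩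
  calc α = y 0 := hy0.symm
    _ ≤ y z := hmono h0 hz hz.1
end

section
/- Let y be a C² solution on [0, ∞) of ÿ(z) + (1/z)ẏ(z) = σ/y(z)², σ > 0, with y(0) = α > 0 and ẏ(0) = 0. If y is bounded above by a constant β > 0 on [0, ∞), then y(z) ≥ α + (σ/(4β²)) z² for all z ≥ 0, which contradicts the bound; hence y is unbounded, i.e., lim_{z→∞} y(z) = ∞. -/
open Set Filter

theorem stmt3 (σ α : ℝ) (hσ : 0 < σ) (hα : 0 < α)
    (y : ℝ → ℝ) (hy : ContDiff ℝ 2 y)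
    (hpos : ∀ z, 0 ≤ z → 0 < y z)
    (hy0 : y 0 = α) (hy'0 : deriv y 0 = 0)
    (hode : ∀ z, 0 < z →
      deriv (deriv y) z + (1 / z) * deriv y z = σ / (y z) ^ 2) :
    (∀ β : ℝ, 0 < β → (∀ z, 0 ≤ z → y z ≤ β) →
      ∀ z, 0 ≤ z → α + (σ / (4 * β ^ 2)) * z ^ 2 ≤ y z) ∧
      Tendsto y atTop atTop := by
  have hyd : Differentiable ℝ y := hy.differentiable (by norm_num)
  have hy1 : ContDiff ℝ 1 (deriv y) := by
    have h2 : ((2:ℕ) : WithTop ℕ∞) = 1 + 1 := by norm_num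
    exact (contDiff_succ_iff_deriv.mp (h2 ▸ hy)).2.2
  have hyd' : Differentiable ℝ (deriv y) := hy1.differentiable (by norm_num)
  have hy'cont : Continuous (deriv y) := hyd'.continuous
  -- derivative of g z = z * deriv y z
  have hg : ∀ s, 0 ≤ s → HasDerivAt (fun t => t * deriv y t) (s * (σ / y s ^ 2)) s := by
    intro s hs
    have h1 : HasDerivAt (fun t => t * deriv y t)
        (1 * deriv y s + s * deriv (deriv y) s) s :=
      (hasDerivAt_id s).mul (hyd' s).hasDerivAt
    convert h1 using 1
    rcases eq_or_lt_of_le hs with h | h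
    · simp [← h, hy'0]
    · have hs0 : s ≠ 0 := ne_of_gt h
      have hys : y s ≠ 0 := ne_of_gt (hpos s hs)
      have hd2 : deriv (deriv y) s = σ / y s ^ 2 - (1 / s) * deriv y s := by
        linarith [hode s h]
      rw [hd2]
      field_simp
      ring
  have hcont : ∀ z : ℝ, 0 ≤ z →
      ContinuousOn (fun s => s * (σ / y s ^ 2)) (Icc 0 z) := by
    intro z hz
    exact continuousOn_id.mul (continuousOn_const.div
      ((hy.continuous.pow 2).continuousOn)
      (fun s hs => pow_ne_zero 2 (ne_of_gt (hpos s hs.1))))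
  have key : ∀ z, 0 ≤ z →
      z * deriv y z = ∫ s in (0:ℝ)..z, s * (σ / y s ^ 2) := by
    intro z hz
    have huIcc : uIcc (0:ℝ) z = Icc 0 z := uIcc_of_le hz
    have := intervalIntegral.integral_eq_sub_of_hasDerivAt
      (f := fun t => t * deriv y t) (f' := fun s => s * (σ / y s ^ 2))
      (fun s hs => hg s (by rw [huIcc] at hs; exact hs.1))
      (((hcont z hz).mono (by rw [huIcc])).intervalIntegrable)
    simp at this
    linarith [this]
  -- deriv y nonneg on [0, ∞)
  have hderiv_nonneg : ∀ z, 0 ≤ z → 0 ≤ deriv y z := by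
    intro z hz
    rcases eq_or_lt_of_le hz with h | h
    · rw [← h, hy'0]
    · have h1 : 0 ≤ ∫ s in (0:ℝ)..z, s * (σ / y s ^ 2) := by
        apply intervalIntegral.integral_nonneg hz
        intro u hu
        exact mul_nonneg hu.1 (div_nonneg hσ.le (sq_nonneg _))
      have h2 := key z hz
      nlinarith
  have hmono : MonotoneOn y (Ici 0) := by
    apply monotoneOn_of_deriv_nonneg (convex_Ici 0) hy.continuous.continuousOn
      (hyd.differentiableOn.mono interior_subset)
    intro x hx
    rw [interior_Ici] at hx
    exact hderiv_nonneg x (le_of_lt hx)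
  -- Part 1
  have part1 : ∀ β : ℝ, 0 < β → (∀ z, 0 ≤ z → y z ≤ β) →
      ∀ z, 0 ≤ z → α + (σ / (4 * β ^ 2)) * z ^ 2 ≤ y z := by
    intro β hβ hbd z hz
    -- first: deriv y z ≥ σ/(2β²) * z for z ≥ 0
    set c := σ / β ^ 2 with hc
    have hder : ∀ w, 0 ≤ w → c / 2 * w ≤ deriv y w := by
      intro w hw
      rcases eq_or_lt_of_le hw with h | h
      · rw [← h, hy'0]; simp
      · have hle : ∫ s in (0:ℝ)..w, s * (σ / β ^ 2) ≤
            ∫ s in (0:ℝ)..w, s * (σ / y s ^ 2) := by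
          apply intervalIntegral.integral_mono_on hw
          · exact ((continuousOn_id.mul continuousOn_const).mono
              (by rw [uIcc_of_le hw] : uIcc (0:ℝ) w ⊆ Icc 0 w)).intervalIntegrable
          · exact ((hcont w hw).mono (by rw [uIcc_of_le hw])).intervalIntegrable
          · intro u hu
            have hu0 := hpos u hu.1
            have huβ := hbd u hu.1
            have : c ≤ σ / y u ^ 2 := by
              rw [hc]
              apply div_le_div_of_nonneg_left (le_of_lt hσ) (by positivity)
              nlinarith
            nlinarith [hu.1]
        have hval : ∫ s in (0:ℝ)..w, s * c = w ^ 2 / 2 * c := by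
          rw [intervalIntegral.integral_mul_const, integral_id]
          ring
        have h2 := key w hw
        rw [hval] at hle
        have hw0 : (0:ℝ) < w := h
        rw [← h2] at hle
        nlinarith [hle, hw0]
    -- integrate again
    have huIcc : uIcc (0:ℝ) z = Icc 0 z := uIcc_of_le hz
    have hFTC : ∫ s in (0:ℝ)..z, deriv y s = y z - y 0 :=
      intervalIntegral.integral_eq_sub_of_hasDerivAt
        (fun s _ => (hyd s).hasDerivAt) (hy'cont.intervalIntegrable 0 z)
    have hle2 : ∫ s in (0:ℝ)..z, c / 2 * s ≤ ∫ s in (0:ℝ)..z, deriv y s := by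
      apply intervalIntegral.integral_mono_on hz
      · exact (Continuous.intervalIntegrable (by continuity) 0 z)
      · exact hy'cont.intervalIntegrable 0 z
      · intro u hu; exact hder u hu.1
    have hval2 : ∫ s in (0:ℝ)..z, c / 2 * s = c / 2 * (z ^ 2 / 2) := by
      rw [intervalIntegral.integral_const_mul, integral_id]
      ring
    rw [hval2, hFTC, hy0] at hle2
    have hcc : σ / (4 * β ^ 2) * z ^ 2 = c / 2 * (z ^ 2 / 2) := by
      rw [hc, div_div, div_mul_eq_mul_div, div_mul_eq_mul_div,
        div_eq_div_iff (by positivity) (by positivity)]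
      ring
    linarith [hcc ▸ hle2]
  refine ⟨part1, ?_⟩
  rw [tendsto_atTop_atTop]
  intro b
  set β := max b (α + 1) with hβdef
  have hβα : α < β := lt_of_lt_of_le (by linarith) (le_max_right _ _)
  have hβpos : 0 < β := lt_trans hα hβα
  have hexists : ∃ z₀, 0 ≤ z₀ ∧ β ≤ y z₀ := by
    by_contra hcon
    push_neg at hcon
    have hbd : ∀ z, 0 ≤ z → y z ≤ β := fun z hz => le_of_lt (hcon z hz)
    set z₀ := Real.sqrt ((β - α) * (4 * β ^ 2) / σ) with hz₀
    have hz₀nn : 0 ≤ z₀ := Real.sqrt_nonneg _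
    have hz₀sq : z₀ ^ 2 = (β - α) * (4 * β ^ 2) / σ := by
      rw [hz₀, Real.sq_sqrt]
      exact div_nonneg (mul_nonneg (by linarith) (by positivity)) hσ.le
    have := part1 β hβpos hbd z₀ hz₀nn
    rw [hz₀sq] at this
    have heq : α + σ / (4 * β ^ 2) * ((β - α) * (4 * β ^ 2) / σ) = β := by
      field_simp
      ring
    rw [heq] at this
    exact absurd this (not_le.mpr (hcon z₀ hz₀nn))
  obtain ⟨z₀, hz₀, hyz₀⟩ := hexists
  refine ⟨z₀, fun a ha => ?_⟩
  have h1 : y z₀ ≤ y a := hmono hz₀ (le_trans hz₀ ha) ha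
  have h2 : b ≤ β := le_max_left _ _
  linarith
end

section
/- Let σ > 0 and let y be a C² solution on [0,∞) of ÿ(z) + (1/z)ẏ(z) = σ/y(z)² with y(0) = α > 0, ẏ(0) = 0, y > 0. Define Q(z) = (C/√κ) ẏ(z) - (2π/z) ∫₀ᶻ τ / y(τ)² dτ for z > 0, where σ = 2π√κ/C with κ > 0 and C > 0. Then Q satisfies Q̇(z) = -(1/z) Q(z) for z > 0, and Q(z) → 0 as z → 0⁺; consequently Q(z) = 0 for all z > 0. -/
open Set Filter Real intervalIntegral

theorem stmt5 (κ C α : ℝ) (hκ : 0 < κ) (hC : 0 < C) (hα : 0 < α)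
    (σ : ℝ) (hσ : σ = 2 * Real.pi * Real.sqrt κ / C)
    (y : ℝ → ℝ) (hy : ContDiff ℝ 2 y)
    (hpos : ∀ z, 0 ≤ z → 0 < y z)
    (hy0 : y 0 = α) (hy'0 : deriv y 0 = 0)
    (hode : ∀ z, 0 < z →
      deriv (deriv y) z + (1 / z) * deriv y z = σ / (y z) ^ 2)
    (Q : ℝ → ℝ)
    (hQ : ∀ z, 0 < z → Q z = (C / Real.sqrt κ) * deriv y z -
      (2 * Real.pi / z) * ∫ τ in (0:ℝ)..z, τ / (y τ) ^ 2) :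
    (∀ z, 0 < z → deriv Q z = -(1 / z) * Q z) ∧
      Tendsto Q (nhdsWithin 0 (Ioi 0)) (nhds 0) ∧
      ∀ z, 0 < z → Q z = 0 := by
  have hsκ : 0 < Real.sqrt κ := Real.sqrt_pos.mpr hκ
  have hσpos : 0 < σ := by
    rw [hσ]
    positivity
  have hy1 : ContDiff ℝ 1 (deriv y) := by
    have := (contDiff_succ_iff_deriv (n := 1)).mp (show ContDiff ℝ (1 + 1) y by
      norm_num; exact hy)
    exact this.2.2
  have hdy : Differentiable ℝ y := hy.differentiable (by norm_num)
  have hdy2 : Differentiable ℝ (deriv y) := hy1.differentiable (by norm_num)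
  have hcont2 : Continuous (deriv (deriv y)) := by
    have := (contDiff_succ_iff_deriv (n := 0)).mp (show ContDiff ℝ (0 + 1) (deriv y) by
      norm_num; exact hy1)
    exact this.2.2.continuous
  have hcont1 : Continuous (deriv y) := hdy2.continuous
  -- the auxiliary function g t = t * y'(t)
  have hg : ∀ t : ℝ, HasDerivAt (fun t => t * deriv y t)
      (deriv y t + t * deriv (deriv y) t) t := by
    intro t
    have := (hasDerivAt_id' t).mul ((hdy2 t).hasDerivAt)
    exact this.congr_deriv (by ring)
  have hint : ∀ z : ℝ, IntervalIntegrable (fun t => deriv y t + t * deriv (deriv y) t)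
      MeasureTheory.volume 0 z := fun z =>
    (hcont1.add (continuous_id.mul hcont2)).intervalIntegrable 0 z
  have key : ∀ z : ℝ, 0 < z →
      (∫ τ in (0:ℝ)..z, τ / (y τ) ^ 2) = z * deriv y z / σ := by
    intro z hz
    have hftc : (∫ t in (0:ℝ)..z, (deriv y t + t * deriv (deriv y) t)) =
        z * deriv y z - 0 * deriv y 0 :=
      intervalIntegral.integral_eq_sub_of_hasDerivAt (fun t _ => hg t) (hint z)
    have hEq : EqOn (fun t : ℝ => deriv y t + t * deriv (deriv y) t)
        (fun t : ℝ => σ * (t / (y t) ^ 2)) (uIcc 0 z) := by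
      intro t ht
      rw [uIcc_of_le hz.le] at ht
      obtain ⟨ht0, htz⟩ := ht
      rcases eq_or_lt_of_le ht0 with h | h
      · simp [← h, hy'0]
      · have hode' := hode t h
        have hyt : y t ≠ 0 := (hpos t ht0).ne'
        have htne : t ≠ 0 := h.ne'
        field_simp at hode' ⊢
        nlinarith [hode']
    have h2 : (∫ t in (0:ℝ)..z, σ * (t / (y t) ^ 2)) = z * deriv y z := by
      rw [← intervalIntegral.integral_congr hEq, hftc]; ring
    rw [intervalIntegral.integral_const_mul] at h2
    field_simp
    linarith [h2]
  have hQ0 : ∀ z, 0 < z → Q z = 0 := by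
    intro z hz
    rw [hQ z hz, key z hz, hσ]
    have hπ : (0:ℝ) < Real.pi := Real.pi_pos
    field_simp
    ring
  refine ⟨?_, ?_, hQ0⟩
  · intro z hz
    have hev : Q =ᶠ[nhds z] (fun _ => (0:ℝ)) := by
      filter_upwards [Ioi_mem_nhds hz] with t ht using hQ0 t ht
    rw [hev.deriv_eq, hQ0 z hz]
    simp
  · have : Tendsto (fun _ : ℝ => (0:ℝ)) (nhdsWithin 0 (Ioi 0)) (nhds 0) :=
      tendsto_const_nhds
    refine this.congr' ?_
    filter_upwards [self_mem_nhdsWithin] with t ht using (hQ0 t ht).symm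
end
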